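/- For every q with −∞ < q < 1, the integral C_q = ∫_{−∞}^{∞} e_q^{−x²} dx equals 2√π · Γ(1/(1−q)) / ( (3−q) √(1−q) · Γ((3−q)/(2(1−q))) ). -/

import Mathlib

open MeasureTheory Filter Real Topology

/-- The `q`-exponential `e_q^x = [1 + (1-q)x]_+^{1/(1-q)}` (with `e_1^x = e^x`). -/
noncomputable def qExp (q x : ℝ) : ℝ :=
  if q = 1 then Real.exp x else (max (1 + (1 - q) * x) 0) ^ (1 / (1 - q))

/-- The `q`-exponential of a complex argument, via the principal power. -/
noncomputable def qExpC (q : ℝ) (w : ℂ) : ℂ :=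
  if q = 1 then Complex.exp w else (1 + (1 - (q : ℂ)) * w) ^ ((1 : ℂ) / (1 - (q : ℂ)))

/-- The `q`-product on complex numbers, via principal powers. -/
noncomputable def qProdC (q : ℝ) (x y : ℂ) : ℂ :=
  if q = 1 then x * y
  else (x ^ ((1 : ℂ) - (q : ℂ)) + y ^ ((1 : ℂ) - (q : ℂ)) - 1) ^ ((1 : ℂ) / (1 - (q : ℂ)))

/-- The normalizing constant `C_q = ∫ e_q^{-x²} dx`. -/
noncomputable def qC (q : ℝ) : ℝ := ∫ x : ℝ, qExp q (-x ^ 2)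

/-- The `q`-Gaussian `G_q(β; x) = (√β / C_q) e_q^{-βx²}`. -/
noncomputable def qGaussian (q β x : ℝ) : ℝ := (Real.sqrt β / qC q) * qExp q (-(β * x ^ 2))

/-- The `q`-Fourier transform `F_q[f](ξ) = ∫ f(x) e_q^{i x ξ f(x)^{q-1}} dx`. -/
noncomputable def qFourier (q : ℝ) (f : ℝ → ℝ) (ξ : ℝ) : ℂ :=
  ∫ x : ℝ, (f x : ℂ) * qExpC q (Complex.I * (x : ℂ) * (ξ : ℂ) * ((f x ^ (q - 1) : ℝ) : ℂ))

/-- The `q`-mean `μ_q(f) = ∫ x f(x)^q dx / ∫ f(x)^q dx`. -/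
noncomputable def qMean (q : ℝ) (f : ℝ → ℝ) : ℝ :=
  (∫ x : ℝ, x * f x ^ q) / (∫ x : ℝ, f x ^ q)

/-- The `q`-variance `σ_q²(f) = ∫ (x-μ_q(f))² f(x)^q dx / ∫ f(x)^q dx`. -/
noncomputable def qVar (q : ℝ) (f : ℝ → ℝ) : ℝ :=
  (∫ x : ℝ, (x - qMean q f) ^ 2 * f x ^ q) / (∫ x : ℝ, f x ^ q)

/-- Iterated `q`-product `w ⊗_q ⋯ ⊗_q w` (`N` factors). -/
noncomputable def qProdPow (q : ℝ) (w : ℂ) : ℕ → ℂ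
  | 0 => 1
  | 1 => w
  | n + 2 => qProdC q w (qProdPow q w (n + 1))

/-- `z(s) = (1+s)/(3-s)`. -/
noncomputable def zmap (s : ℝ) : ℝ := (1 + s) / (3 - s)

/-- The inverse of `z`: `z⁻¹(t) = (3t-1)/(1+t)`. -/
noncomputable def zinvmap (t : ℝ) : ℝ := (3 * t - 1) / (1 + t)

set_option maxHeartbeats 1000000

lemma real_beta_half (p : ℝ) (hp : 0 < p) :
    ∫ t in (0:ℝ)..1, t ^ (-(1/2):ℝ) * (1-t) ^ p
      = Real.sqrt π * Real.Gamma (p+1) / Real.Gamma (p + 3/2) := by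
  have key := Complex.Gamma_mul_Gamma_eq_betaIntegral
    (s := (1/2 : ℂ)) (t := ((p : ℂ) + 1)) (by norm_num)
    (by simp; positivity)
  have hB : Complex.betaIntegral (1/2) ((p:ℂ)+1)
      = ((∫ t in (0:ℝ)..1, t ^ (-(1/2):ℝ) * (1-t) ^ p : ℝ) : ℂ) := by
    rw [Complex.betaIntegral, ← intervalIntegral.integral_ofReal]
    apply intervalIntegral.integral_congr
    intro x hx
    rw [Set.uIcc_of_le (by norm_num : (0:ℝ) ≤ 1)] at hx
    simp only []
    rw [Complex.ofReal_mul, Complex.ofReal_cpow hx.1, Complex.ofReal_cpow (by linarith [hx.2])]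
    push_cast
    norm_num
  rw [hB] at key
  have h32 : (1/2 : ℂ) + ((p:ℂ)+1) = ((p + 3/2 : ℝ) : ℂ) := by push_cast; ring
  have h1 : ((p:ℂ)+1) = ((p+1 : ℝ):ℂ) := by push_cast; ring
  rw [h32, h1] at key
  have hhalf : Complex.Gamma (1/2 : ℂ) = (Real.sqrt π : ℂ) := by
    rw [show (1/2:ℂ) = ((1/2:ℝ):ℂ) by norm_num, Complex.Gamma_ofReal,
      Real.Gamma_one_half_eq]
  rw [hhalf, Complex.Gamma_ofReal, Complex.Gamma_ofReal] at key
  have hne : Real.Gamma (p + 3/2) ≠ 0 := (Real.Gamma_pos_of_pos (by linarith)).ne'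
  rw [← Complex.ofReal_mul, ← Complex.ofReal_mul, Complex.ofReal_inj] at key
  rw [key]
  field_simp


/-- For `q < 1`, `C_q = 2√π Γ(1/(1-q)) / ((3-q)√(1-q) Γ((3-q)/(2(1-q))))`. -/
theorem qC_eq_of_q_lt_one (q : ℝ) (hq : q < 1) :
    qC q = 2 * Real.sqrt π * Real.Gamma (1 / (1 - q)) /
      ((3 - q) * Real.sqrt (1 - q) * Real.Gamma ((3 - q) / (2 * (1 - q)))) := by
  have hq1 : 0 < 1 - q := by linarith
  set p : ℝ := 1 / (1 - q) with hp_def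
  have hp : 0 < p := by positivity
  set s : ℝ := Real.sqrt (1 - q) with hs_def
  have hs : 0 < s := Real.sqrt_pos.mpr hq1
  have hs2 : s ^ 2 = 1 - q := Real.sq_sqrt hq1.le
  set g : ℝ → ℝ := fun y => (max (1 - y ^ 2) 0) ^ p with hg_def
  have step1 : qC q = ∫ x : ℝ, g (s * x) := by
    unfold qC qExp
    simp only [if_neg hq.ne, hg_def, ← hp_def]
    congr 1; funext x
    congr 2
    rw [mul_pow, hs2]; ring
  have step2 : (∫ x : ℝ, g (s * x)) = s⁻¹ * ∫ y, g y := by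
    rw [MeasureTheory.Measure.integral_comp_mul_left g s, abs_of_pos (by positivity), smul_eq_mul]
  have step3 : (∫ y : ℝ, g y) = ∫ y in (-1:ℝ)..1, (1 - y ^ 2) ^ p := by
    rw [← MeasureTheory.setIntegral_eq_integral_of_forall_compl_eq_zero
      (s := Set.Ioc (-1:ℝ) 1) ?_]
    · rw [← intervalIntegral.integral_of_le (by norm_num : (-1:ℝ) ≤ 1)]
      apply intervalIntegral.integral_congr
      intro y hy
      rw [Set.uIcc_of_le (by norm_num)] at hy
      have h1 : 0 ≤ 1 - y ^ 2 := by nlinarith [hy.1, hy.2]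
      simp [hg_def, max_eq_left h1]
    · intro y hy
      simp only [Set.mem_Ioc, not_and_or, not_le, not_lt] at hy
      have h2 : 1 - y ^ 2 ≤ 0 := by rcases hy with h | h <;> nlinarith
      simp [hg_def, max_eq_right h2, Real.zero_rpow hp.ne']
  have hcont : Continuous fun y : ℝ => (1 - y ^ 2) ^ p :=
    Continuous.rpow_const (by continuity) (fun x => Or.inr hp.le)
  have step4 : (∫ y in (-1:ℝ)..1, (1 - y ^ 2) ^ p)
      = 2 * ∫ y in (0:ℝ)..1, (1 - y ^ 2) ^ p := by
    have h1 : (∫ y in (-1:ℝ)..(0:ℝ), (1 - y ^ 2) ^ p)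
        = ∫ y in (0:ℝ)..1, (1 - y ^ 2) ^ p := by
      rw [show (-1:ℝ) = -(1:ℝ) by norm_num, show (0:ℝ) = -(0:ℝ) by norm_num,
        ← intervalIntegral.integral_comp_neg (fun y => (1 - y ^ 2) ^ p)]
      simp
    rw [← intervalIntegral.integral_add_adjacent_intervals (a := (-1:ℝ)) (b := 0) (c := 1)
      (hcont.intervalIntegrable _ _) (hcont.intervalIntegrable _ _), h1]
    ring
  set G : ℝ → ℝ := fun t => 1/2 * (t ^ (-(1/2):ℝ) * (1-t) ^ p) with hG_def
  have hpt : ∀ x : ℝ, 0 < x → (2*x) • G (x ^ 2) = (1 - x ^ 2) ^ p := by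
    intro x hx
    have h1 : (x ^ 2 : ℝ) ^ (-(1/2):ℝ) = x⁻¹ := by
      rw [← Real.rpow_natCast x 2, ← Real.rpow_mul hx.le]
      norm_num
      exact Real.rpow_neg_one x
    rw [hG_def, smul_eq_mul]
    simp only [h1]
    field_simp
  have hGint : IntegrableOn G (Set.Icc (0:ℝ) 1) := by
    have h1 : IntervalIntegrable (fun t : ℝ => t ^ (-(1/2):ℝ)) volume 0 1 :=
      intervalIntegral.intervalIntegrable_rpow' (by norm_num)
    have h2 : IntervalIntegrable (fun t : ℝ => t ^ (-(1/2):ℝ) * (1-t) ^ p) volume 0 1 :=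
      h1.mul_continuousOn (Continuous.continuousOn
        (Continuous.rpow_const (by continuity) (fun x => Or.inr hp.le)))
    have h3 := (h2.const_mul (1/2 : ℝ))
    rw [intervalIntegrable_iff_integrableOn_Icc_of_le (by norm_num : (0:ℝ) ≤ 1)] at h3
    exact h3
  have hGcont : ContinuousOn G (Set.Ioi (0:ℝ)) := by
    apply ContinuousOn.mul continuousOn_const
    refine ContinuousOn.mul ?_ (Continuous.continuousOn
      (Continuous.rpow_const (by continuity) fun x => Or.inr hp.le))
    intro t ht
    exact (Real.continuousAt_rpow_const t _ (Or.inl (ne_of_gt ht))).continuousWithinAt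
  have step5 : (∫ y in (0:ℝ)..1, (1 - y ^ 2) ^ p) = ∫ t in (0:ℝ)..1, G t := by
    have hsub := intervalIntegral.integral_comp_smul_deriv''' (a := (0:ℝ)) (b := 1)
      (f := fun y => y ^ 2) (f' := fun y => 2 * y) (g := G)
      (by fun_prop)
      (by
        intro x hx
        simpa using ((hasDerivAt_pow 2 x).hasDerivWithinAt (s := Set.Ioi x)))
      (hGcont.mono ?_) ?_ ?_
    · norm_num at hsub
      rw [← hsub]
      apply intervalIntegral.integral_congr_ae
      have h01 : Set.uIoc (0:ℝ) 1 = Set.Ioc 0 1 := Set.uIoc_of_le (by norm_num)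
      filter_upwards with x hx
      rw [h01] at hx
      exact (hpt x hx.1).symm
    · rintro t ⟨x, hx, rfl⟩
      rw [show min (0:ℝ) 1 = 0 by norm_num, show max (0:ℝ) 1 = 1 by norm_num] at hx
      have : (0:ℝ) < x := hx.1
      exact pow_pos this 2
    · apply hGint.mono_set
      rintro t ⟨x, hx, rfl⟩
      rw [Set.uIcc_of_le (by norm_num : (0:ℝ) ≤ 1)] at hx
      show x ^ 2 ∈ Set.Icc (0:ℝ) 1
      have h2 : x ^ 2 ≤ 1 := by nlinarith [hx.1, hx.2]
      exact Set.mem_Icc.mpr ⟨sq_nonneg x, h2⟩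
    · rw [Set.uIcc_of_le (by norm_num : (0:ℝ) ≤ 1)]
      apply (hcont.integrableOn_Icc).congr
      have h0 : ∀ᵐ (x : ℝ), x ≠ 0 := by
        have := MeasureTheory.compl_mem_ae_iff.mpr
          (MeasureTheory.measure_singleton (μ := (volume : Measure ℝ)) 0)
        filter_upwards [this] with x hx
        simpa using hx
      filter_upwards [MeasureTheory.ae_restrict_of_ae h0,
        MeasureTheory.ae_restrict_mem measurableSet_Icc] with x hx hmem
      exact (hpt x (lt_of_le_of_ne hmem.1 (Ne.symm hx))).symm
  have hBval := real_beta_half p hp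
  have hGval : (∫ t in (0:ℝ)..1, G t)
      = 1/2 * (Real.sqrt π * Real.Gamma (p+1) / Real.Gamma (p + 3/2)) := by
    rw [hG_def]
    rw [intervalIntegral.integral_const_mul, hBval]
  have hq3 : (0:ℝ) < 3 - q := by linarith
  have hhalfp : (3 - q) / (2 * (1 - q)) = p + 1/2 := by
    rw [hp_def]; field_simp; ring
  have hG1 : Real.Gamma (p + 1) = p * Real.Gamma p := Real.Gamma_add_one hp.ne'
  have hG2 : Real.Gamma (p + 3/2) = (p + 1/2) * Real.Gamma (p + 1/2) := by
    rw [show p + 3/2 = (p + 1/2) + 1 by ring, Real.Gamma_add_one (by positivity)]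
  have hGpos : (0:ℝ) < Real.Gamma (p + 1/2) := Real.Gamma_pos_of_pos (by positivity)
  have hpq : p * (1 - q) = 1 := by rw [hp_def]; field_simp
  rw [step1, step2, step3, step4, step5, hGval, hG1, hG2, hhalfp]
  clear_value p s
  have hp2 : (0:ℝ) < p + 1/2 := by positivity
  field_simp
  linear_combination hpq
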